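/- Let n be a natural number and let I be an ideal of MvPolynomial (Fin n) (ZMod 2). Then the vanishing ideal of the zero locus of I over the points (Fin n → ZMod 2) equals I ⊔ F_n; that is, a polynomial p ∈ MvPolynomial (Fin n) (ZMod 2) vanishes at every common zero in (ZMod 2)^n of the polynomials in I if and only if p ∈ I ⊔ F_n. (Nullstellensatz over the finite field F₂: adjoining the field equations computes 𝕀(𝕍(I)).) -/

import Mathlib

/-- The field-equations ideal of `MvPolynomial (Fin n) (ZMod 2)`,
generated by the polynomials `X i ^ 2 - X i`. -/
noncomputable def fieldEqnIdeal (n : ℕ) : Ideal (MvPolynomial (Fin n) (ZMod 2)) :=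
  Ideal.span {p | ∃ i : Fin n, p = MvPolynomial.X i ^ 2 - MvPolynomial.X i}

open MvPolynomial

private lemma zmod2_sq : ∀ z : ZMod 2, z ^ 2 = z := by decide

private lemma zmod2_ne_zero : ∀ z : ZMod 2, z ≠ 0 → z = 1 := by decide

/-- Every element of the field-equations ideal vanishes at every point. -/
private lemma eval_fieldEqnIdeal {n : ℕ} {p : MvPolynomial (Fin n) (ZMod 2)}
    (hp : p ∈ fieldEqnIdeal n) (x : Fin n → ZMod 2) : eval x p = 0 := by
  have : fieldEqnIdeal n ≤ vanishingIdeal (ZMod 2) (Set.univ : Set (Fin n → ZMod 2)) := by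
    rw [fieldEqnIdeal, Ideal.span_le]
    rintro q ⟨i, rfl⟩
    rw [SetLike.mem_coe, mem_vanishingIdeal_iff]
    intro y _
    simp [zmod2_sq]
  exact mem_vanishingIdeal_iff.mp (this hp) x (Set.mem_univ x)

private lemma monomial_mem_restrictDegree {n m : ℕ} (s : Fin n →₀ ℕ) (a : ZMod 2)
    (h : ∀ i, s i ≤ m) : monomial s a ∈ restrictDegree (Fin n) (ZMod 2) m := by
  classical
  rw [mem_restrictDegree]
  intro t ht i
  rcases eq_or_ne a 0 with rfl | ha
  · simp at ht
  · rw [support_monomial, if_neg ha, Finset.mem_singleton] at ht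
    subst ht; exact h i

/-- A polynomial vanishing at all points of `(ZMod 2)^n` lies in the field-equations ideal. -/
private lemma mem_fieldEqnIdeal_of_eval_zero {n : ℕ} {p : MvPolynomial (Fin n) (ZMod 2)}
    (h : ∀ x : Fin n → ZMod 2, eval x p = 0) : p ∈ fieldEqnIdeal n := by
  classical
  set F := fieldEqnIdeal n with hF
  set π := Ideal.Quotient.mk F with hπ
  have hX : ∀ i : Fin n, π (X i) * π (X i) = π (X i) := by
    intro i
    rw [← map_mul, ← sq]
    exact Ideal.Quotient.eq.mpr (Ideal.subset_span ⟨i, rfl⟩)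
  have hXk : ∀ (i : Fin n) (k : ℕ), 1 ≤ k → π (X i) ^ k = π (X i) := by
    intro i k hk
    induction k with
    | zero => omega
    | succ k ih =>
      rcases Nat.lt_or_ge 1 (k + 1) with h1 | h1
      · have hk' : 1 ≤ k := by omega
        rw [pow_succ, ih hk', hX]
      · have hk0 : k = 0 := by omega
        subst hk0
        rw [pow_one]
  -- squash exponents to at most 1
  let sq' : (Fin n →₀ ℕ) → (Fin n →₀ ℕ) := fun d => d.mapRange (fun k => min k 1) (by simp)
  have hsq_supp : ∀ d : Fin n →₀ ℕ, (sq' d).support = d.support := by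
    intro d
    ext i
    simp only [sq', Finsupp.mem_support_iff, Finsupp.mapRange_apply]
    omega
  have hsq_apply : ∀ (d : Fin n →₀ ℕ) (i : Fin n), i ∈ d.support → sq' d i = 1 := by
    intro d i hi
    rw [Finsupp.mem_support_iff] at hi
    simp only [sq', Finsupp.mapRange_apply]
    omega
  have key : ∀ (d : Fin n →₀ ℕ) (c : ZMod 2), π (monomial d c) = π (monomial (sq' d) c) := by
    intro d c
    rw [monomial_eq, monomial_eq, map_mul, map_mul]
    congr 1
    rw [Finsupp.prod, Finsupp.prod, hsq_supp, map_prod, map_prod]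
    refine Finset.prod_congr rfl fun i hi => ?_
    rw [map_pow, map_pow, hXk i (d i) (by rw [Finsupp.mem_support_iff] at hi; omega),
      hsq_apply d i hi, pow_one]
  set q : MvPolynomial (Fin n) (ZMod 2) :=
    ∑ d ∈ p.support, monomial (sq' d) (coeff d p) with hq
  have hqF : π q = π p := by
    conv_rhs => rw [← support_sum_monomial_coeff p]
    rw [map_sum, map_sum]
    exact Finset.sum_congr rfl fun d _ => (key d (coeff d p)).symm
  have hpq : p - q ∈ F := by
    rw [← Ideal.Quotient.eq_zero_iff_mem, map_sub, hqF, sub_self]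
  have hqdeg : q ∈ restrictDegree (Fin n) (ZMod 2) 1 := by
    refine Submodule.sum_mem _ fun d _ => monomial_mem_restrictDegree _ _ fun i => ?_
    simp only [sq', Finsupp.mapRange_apply]
    omega
  have hqeval : ∀ x : Fin n → ZMod 2, eval x q = 0 := by
    intro x
    have := eval_fieldEqnIdeal hpq x
    rw [map_sub, h x, zero_sub, neg_eq_zero] at this
    exact this
  have hq0 : q = 0 := by
    refine eq_zero_of_eval_eq_zero (Fin n) (ZMod 2) q hqeval ?_
    have hcard : Fintype.card (ZMod 2) - 1 = 1 := by simp
    rwa [hcard]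
  have : p = p - q := by rw [hq0, sub_zero]
  rw [this]
  exact hpq

theorem vanishingIdeal_zeroLocus_eq_sup_fieldEqnIdeal (n : ℕ)
    (I : Ideal (MvPolynomial (Fin n) (ZMod 2))) :
    MvPolynomial.vanishingIdeal (ZMod 2) (MvPolynomial.zeroLocus (ZMod 2) I) = I ⊔ fieldEqnIdeal n := by
  classical
  apply le_antisymm
  · intro p hp
    rw [mem_vanishingIdeal_iff] at hp
    change ∀ x ∈ MvPolynomial.zeroLocus (ZMod 2) I, eval x p = 0 at hp
    set Z := MvPolynomial.zeroLocus (ZMod 2) I with hZ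
    have hw : ∀ a : Fin n → ZMod 2, a ∉ Z →
        ∃ q, q ∈ I ∧ eval a q = 1 := by
      intro a ha
      rw [hZ, mem_zeroLocus_iff] at ha
      push_neg at ha
      obtain ⟨q, hqI, hq⟩ := ha
      exact ⟨q, hqI, zmod2_ne_zero _ hq⟩
    let w : (Fin n → ZMod 2) → MvPolynomial (Fin n) (ZMod 2) :=
      fun a => if h : a ∈ Z then 0 else (hw a h).choose
    have hwI : ∀ a, w a ∈ I := by
      intro a
      by_cases h : a ∈ Z
      · simp [w, h, Ideal.zero_mem]
      · simpa [w, h] using (hw a h).choose_spec.1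
    have hw1 : ∀ a, a ∉ Z → eval a (w a) = 1 := by
      intro a h
      simpa [w, h] using (hw a h).choose_spec.2
    have hw0 : ∀ a, a ∈ Z → w a = 0 := by
      intro a h; simp [w, h]
    set r : MvPolynomial (Fin n) (ZMod 2) :=
      ∑ a : Fin n → ZMod 2, MvPolynomial.C (eval a p) * indicator a * w a with hr
    have hrI : r ∈ I := by
      exact Ideal.sum_mem I fun a _ => Ideal.mul_mem_left I _ (hwI a)
    have heval : ∀ x : Fin n → ZMod 2, eval x r = eval x p := by
      intro x
      rw [hr, map_sum]
      rw [Finset.sum_eq_single x]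
      · by_cases hx : x ∈ Z
        · rw [hw0 x hx, mul_zero, map_zero, hp x hx]
        · simp only [map_mul, eval_C, eval_indicator_apply_eq_one, hw1 x hx, mul_one]
      · intro a _ hax
        rw [map_mul, map_mul, eval_indicator_apply_eq_zero x a (Ne.symm hax), mul_zero, zero_mul]
      · intro hx
        exact absurd (Finset.mem_univ x) hx
    have hpr : p - r ∈ fieldEqnIdeal n := by
      refine mem_fieldEqnIdeal_of_eval_zero fun x => ?_
      rw [map_sub, heval x, sub_self]
    have : p = r + (p - r) := by ring
    rw [this]
    exact Submodule.add_mem _ (Ideal.mem_sup_left hrI) (Ideal.mem_sup_right hpr)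
  · refine sup_le (le_vanishingIdeal_zeroLocus I) ?_
    intro p hp
    rw [mem_vanishingIdeal_iff]
    intro x _
    exact eval_fieldEqnIdeal hp x
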